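/- Let R be a semiprime ring and a in R. If [a, [R, R]] = 0 (i.e., a commutes with every commutator [x, y] for x, y in R), then a is in the center of R. -/
import Mathlib


/-- The additive subgroup generated by commutators `a*b - b*a` with `a ∈ A`, `b ∈ B`. -/
def commSG (R : Type*) [NonUnitalRing R] (A B : Set R) : AddSubgroup R :=
  AddSubgroup.closure {x | ∃ a ∈ A, ∃ b ∈ B, x = a * b - b * a}

/-- The additive subgroup generated by products `a*b` with `a ∈ A`, `b ∈ B`. -/
def prodSG (R : Type*) [NonUnitalRing R] (A B : Set R) : AddSubgroup R :=
  AddSubgroup.closure {x | ∃ a ∈ A, ∃ b ∈ B, x = a * b}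

/-- `L` is a Lie ideal of `R`. -/
def IsLieIdeal (R : Type*) [NonUnitalRing R] (L : AddSubgroup R) : Prop :=
  ∀ a ∈ L, ∀ r : R, a * r - r * a ∈ L

/-- `sgPow R L n` is the additive subgroup `L^(n+1)` generated by products of `n+1`
elements of `L`. -/
def sgPow (R : Type*) [NonUnitalRing R] (L : AddSubgroup R) : ℕ → AddSubgroup R
  | 0 => L
  | n + 1 => prodSG R (sgPow R L n) L

/-- `R` is a semiprime ring. -/
def IsSemiprimeRing (R : Type*) [NonUnitalRing R] : Prop :=
  ∀ a : R, (∀ x : R, a * x * a = 0) → a = 0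

/-- `R` is a prime ring. -/
def IsPrimeRing (R : Type*) [NonUnitalRing R] : Prop :=
  ∀ a b : R, (∀ x : R, a * x * b = 0) → a = 0 ∨ b = 0

/-- in a semiprime ring, if a commutes with [R,R] then a is central. -/
theorem stmt1 (R : Type*) [NonUnitalRing R] (hR : IsSemiprimeRing R) (a : R)
    (h : ∀ c ∈ commSG R Set.univ Set.univ, a * c = c * a) :
    ∀ x : R, a * x = x * a := by
  have h1 : ∀ u v : R, a * (u * v - v * u) = (u * v - v * u) * a := fun u v =>
    h _ (AddSubgroup.subset_closure ⟨u, trivial, v, trivial, rfl⟩)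
  intro x
  have A : ∀ z : R, (a * x - x * a) * (x * z) = (a * x - x * a) * (z * x) := by
    intro z
    linear_combination (norm := noncomm_ring) h1 x (x * z) - x * h1 x z
  have K : ∀ z : R, (a * x - x * a) * z * (a * x - x * a) = 0 := by
    intro z
    linear_combination (norm := noncomm_ring) A z * a - A (z * a)
  have := hR _ K
  linear_combination (norm := noncomm_ring) this
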